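/- Let A be a primitive square matrix with nonnegative real entries indexed by a finite nonempty type, and let s > 0 and r with all entries strictly positive satisfy A·r = s·r. Then every complex eigenvalue z of A (i.e., every element of the spectrum of A viewed as a complex matrix) with z ≠ s satisfies |z| < s, and the eigenspace of A associated with the eigenvalue s is one-dimensional. -/

import Mathlib

set_option linter.unusedSectionVars false

section RPFhelpers

variable {n : Type*} [Fintype n] [Nonempty n] [DecidableEq n]

lemma rpf_mulVec_mono (A : Matrix n n ℝ) (hA : ∀ i j, 0 ≤ A i j)
    {u v : n → ℝ} (h : ∀ j, u j ≤ v j) (i : n) :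
    A.mulVec u i ≤ A.mulVec v i := by
  simp only [Matrix.mulVec, dotProduct]
  exact Finset.sum_le_sum fun j _ => mul_le_mul_of_nonneg_left (h j) (hA i j)

lemma rpf_mulVec_pos (M : Matrix n n ℝ) (hM : ∀ i j, 0 < M i j)
    {w : n → ℝ} (hw : ∀ j, 0 ≤ w j) (hne : w ≠ 0) (i : n) :
    0 < M.mulVec w i := by
  obtain ⟨j0, hj0⟩ : ∃ j, 0 < w j := by
    by_contra h
    push_neg at h
    exact hne (funext fun j => le_antisymm (h j) (hw j))
  simp only [Matrix.mulVec, dotProduct]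
  calc (0:ℝ) < M i j0 * w j0 := mul_pos (hM i j0) hj0
    _ ≤ ∑ j, M i j * w j :=
      Finset.single_le_sum (f := fun j => M i j * w j)
        (fun j _ => mul_nonneg (hM i j).le (hw j)) (Finset.mem_univ j0)

lemma rpf_pow_eig {R : Type*} [CommRing R] (A : Matrix n n R) (s : R) (r : n → R)
    (heig : A.mulVec r = s • r) (m : ℕ) : (A ^ m).mulVec r = s ^ m • r := by
  induction m with
  | zero => simp [Matrix.one_mulVec]
  | succ m ih =>
    rw [pow_succ', ← Matrix.mulVec_mulVec, ih, Matrix.mulVec_smul, heig,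
      pow_succ', mul_smul]
    exact smul_comm _ _ _

lemma rpf_sub_eig_le (A : Matrix n n ℝ) (hA : ∀ i j, 0 ≤ A i j)
    (s : ℝ) (r : n → ℝ) (hr : ∀ i, 0 < r i) (heig : A.mulVec r = s • r)
    {w : n → ℝ} (hw0 : ∀ i, 0 ≤ w i) (hne : w ≠ 0)
    {ρ : ℝ} (hρ : ∀ i, ρ * w i ≤ A.mulVec w i) : ρ ≤ s := by
  obtain ⟨i0, _, hi0⟩ := Finset.exists_max_image Finset.univ (fun i => w i / r i)
    Finset.univ_nonempty
  set t := w i0 / r i0 with ht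
  have htpos : 0 < t := by
    obtain ⟨j0, hj0⟩ : ∃ j, 0 < w j := by
      by_contra h
      push_neg at h
      exact hne (funext fun j => le_antisymm (h j) (hw0 j))
    exact lt_of_lt_of_le (div_pos hj0 (hr j0)) (hi0 j0 (Finset.mem_univ j0))
  have hwle : ∀ j, w j ≤ t * r j := fun j => by
    have h1 : w j / r j ≤ t := hi0 j (Finset.mem_univ j)
    calc w j = (w j / r j) * r j := (div_mul_cancel₀ _ (hr j).ne').symm
      _ ≤ t * r j := mul_le_mul_of_nonneg_right h1 (hr j).le
  have hwi0 : w i0 = t * r i0 := (div_mul_cancel₀ _ (hr i0).ne').symm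
  have h2 : ρ * w i0 ≤ A.mulVec (t • r) i0 := le_trans (hρ i0) (rpf_mulVec_mono A hA hwle i0)
  rw [Matrix.mulVec_smul, heig, hwi0] at h2
  have h3 : ρ * (t * r i0) ≤ s * (t * r i0) := by
    simpa [smul_smul, mul_comm, mul_assoc, mul_left_comm] using h2
  exact le_of_mul_le_mul_right (by simpa [mul_comm] using h3) (mul_pos htpos (hr i0))

lemma rpf_re_eq_abs {b : ℂ} (h : b.re = ‖b‖) : b = (‖b‖ : ℂ) := by
  have hsq : ‖b‖ ^ 2 = b.re ^ 2 + b.im ^ 2 := by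
    rw [Complex.sq_norm, Complex.normSq_apply]; ring
  have h' : b.re ^ 2 = ‖b‖ ^ 2 := by rw [h]
  have him2 : b.im ^ 2 = 0 := by linarith
  have him : b.im = 0 := by
    exact (pow_eq_zero_iff two_ne_zero).mp him2
  apply Complex.ext
  · simpa using h
  · simpa using him

lemma rpf_align {ι : Type*} [Fintype ι] (a : ι → ℂ)
    (h : ‖∑ j, a j‖ = ∑ j, ‖a j‖) (j : ι) :
    a j * (‖∑ i, a i‖ : ℂ) = (‖a j‖ : ℂ) * (∑ i, a i) := by
  set T := ∑ i, a i with hT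
  by_cases hT0 : T = 0
  · have h0 : ∑ i, ‖a i‖ = 0 := by rw [← h, hT0]; simp
    have hz : ‖a j‖ = 0 :=
      (Finset.sum_eq_zero_iff_of_nonneg
        (fun i _ => norm_nonneg (a i))).mp h0 j (Finset.mem_univ j)
    simp [norm_eq_zero.mp hz]
  · have habsT : (0:ℝ) < ‖T‖ := norm_pos_iff.mpr hT0
    have key : ∀ i, ((starRingEnd ℂ) T * a i).re = ‖T‖ * ‖a i‖ := by
      have hle : ∀ i ∈ Finset.univ, ((starRingEnd ℂ) T * a i).re
          ≤ ‖T‖ * ‖a i‖ := fun i _ => by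
        calc ((starRingEnd ℂ) T * a i).re ≤ ‖(starRingEnd ℂ) T * a i‖ :=
              Complex.re_le_norm _
          _ = ‖T‖ * ‖a i‖ := by
              rw [norm_mul, Complex.norm_conj]
      have hsum : ∑ i, ((starRingEnd ℂ) T * a i).re
          = ∑ i, ‖T‖ * ‖a i‖ := by
        have h1 : ∑ i, ((starRingEnd ℂ) T * a i).re = ((starRingEnd ℂ) T * T).re := by
          rw [hT, Finset.mul_sum, Complex.re_sum]
        have h2 : ((starRingEnd ℂ) T * T).re = ‖T‖ ^ 2 := by
          rw [← Complex.normSq_eq_conj_mul_self, Complex.ofReal_re, ← Complex.sq_norm]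
        rw [h1, h2, ← Finset.mul_sum, ← h, sq]
      intro i
      exact (Finset.sum_eq_sum_iff_of_le hle).mp hsum i (Finset.mem_univ i)
    have hb : (starRingEnd ℂ) T * a j = ((‖T‖ * ‖a j‖ : ℝ) : ℂ) := by
      have h1 : ((starRingEnd ℂ) T * a j).re = ‖(starRingEnd ℂ) T * a j‖ := by
        rw [norm_mul, Complex.norm_conj]; exact key j
      have h2 := rpf_re_eq_abs h1
      rw [h2, norm_mul, Complex.norm_conj]
    have hcast : (T * ((starRingEnd ℂ) T * a j)) = T * ((‖T‖ * ‖a j‖ : ℝ) : ℂ) := by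
      rw [hb]
    have hTT : T * (starRingEnd ℂ) T = ((‖T‖ : ℝ) : ℂ) * ((‖T‖ : ℝ) : ℂ) := by
      rw [Complex.mul_conj, ← Complex.sq_norm]
      push_cast
      ring
    have habsTne : ((‖T‖ : ℝ) : ℂ) ≠ 0 := by
      simpa using habsT.ne'
    apply mul_left_cancel₀ habsTne
    calc ((‖T‖ : ℝ) : ℂ) * (a j * (‖T‖ : ℂ))
        = (T * (starRingEnd ℂ) T) * a j := by rw [hTT]; ring
      _ = T * ((starRingEnd ℂ) T * a j) := by ring
      _ = T * ((‖T‖ * ‖a j‖ : ℝ) : ℂ) := hcast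
      _ = ((‖T‖ : ℝ) : ℂ) * ((‖a j‖ : ℂ) * T) := by
          push_cast; ring

end RPFhelpers

lemma rpf_abs_mulVec {n : Type*} [Fintype n] (M : Matrix n n ℝ) (hM : ∀ i j, 0 ≤ M i j)
    (v : n → ℂ) (i : n) :
    ‖(M.map Complex.ofReal).mulVec v i‖
      ≤ M.mulVec (fun j => ‖v j‖) i := by
  simp only [Matrix.mulVec, dotProduct, Matrix.map_apply]
  calc ‖∑ j, (M i j : ℂ) * v j‖ ≤ ∑ j, ‖(M i j : ℂ) * v j‖ :=
        norm_sum_le _ _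
    _ = ∑ j, M i j * ‖v j‖ := by
        refine Finset.sum_congr rfl fun j _ => ?_
        rw [norm_mul, Complex.norm_real, Real.norm_eq_abs, abs_of_nonneg (hM i j)]

open Complex in
/-- **Ruelle–Perron–Frobenius, spectral gap.**
For a primitive nonnegative matrix with positive eigenvalue `s` and positive
right eigenvector `r`, every complex eigenvalue `z ≠ s` satisfies `|z| < s`,
and the eigenspace for `s` is one-dimensional. -/
theorem rpf_spectral_gap
    {n : Type*} [Fintype n] [Nonempty n] [DecidableEq n]
    (A : Matrix n n ℝ) (hA : ∀ i j, 0 ≤ A i j)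
    (hprim : ∃ k : ℕ, 1 ≤ k ∧ ∀ i j, 0 < (A ^ k) i j)
    (s : ℝ) (hs : 0 < s) (r : n → ℝ) (hr : ∀ i, 0 < r i)
    (heig : A.mulVec r = s • r) :
    (∀ z ∈ spectrum ℂ (A.map (Complex.ofReal)), z ≠ (s : ℂ) → ‖z‖ < s) ∧
      Module.finrank ℝ
        (Module.End.eigenspace (Matrix.toLin' A) s) = 1 := by
  obtain ⟨k, hk1, hk⟩ := hprim
  have hrne : r ≠ 0 := fun h => (hr (Classical.arbitrary n)).ne' (congrFun h _)
  -- Part 2 : the eigenspace is spanned by r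
  have hspan : Module.End.eigenspace (Matrix.toLin' A) s = Submodule.span ℝ {r} := by
    apply le_antisymm
    · intro v hv
      rw [Module.End.mem_eigenspace_iff, Matrix.toLin'_apply] at hv
      obtain ⟨i0, _, hi0⟩ := Finset.exists_min_image Finset.univ (fun i => v i / r i)
        Finset.univ_nonempty
      set t := v i0 / r i0 with ht
      have hle : ∀ j, t * r j ≤ v j := fun j => by
        have h1 : t ≤ v j / r j := hi0 j (Finset.mem_univ j)
        calc t * r j ≤ (v j / r j) * r j := mul_le_mul_of_nonneg_right h1 (hr j).le
          _ = v j := div_mul_cancel₀ _ (hr j).ne'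
      have hAu : A.mulVec (v - t • r) = s • (v - t • r) := by
        rw [Matrix.mulVec_sub, Matrix.mulVec_smul, hv, heig, smul_sub, smul_comm]
      have hu0 : ∀ j, 0 ≤ (v - t • r) j := fun j => by
        simpa [sub_nonneg] using hle j
      have huz : v - t • r = 0 := by
        by_contra hne
        have hpos := rpf_mulVec_pos (A ^ k) hk hu0 hne i0
        rw [rpf_pow_eig A s _ hAu k] at hpos
        have hz0 : (v - t • r) i0 = 0 := by
          simp only [Pi.sub_apply, Pi.smul_apply, smul_eq_mul, ht]
          rw [div_mul_cancel₀ _ (hr i0).ne', sub_self]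
        rw [Pi.smul_apply, hz0, smul_zero] at hpos
        exact lt_irrefl _ hpos
      rw [Submodule.mem_span_singleton]
      exact ⟨t, (sub_eq_zero.mp huz).symm⟩
    · rw [Submodule.span_le, Set.singleton_subset_iff, SetLike.mem_coe,
        Module.End.mem_eigenspace_iff, Matrix.toLin'_apply]
      exact heig
  refine ⟨?_, by rw [hspan]; exact finrank_span_singleton hrne⟩
  -- Part 1
  intro z hz hzne
  have hz' : z ∈ spectrum ℂ (Matrix.toLinAlgEquiv' (A.map Complex.ofReal)) := by
    rwa [AlgEquiv.spectrum_eq]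
  have hev : Module.End.HasEigenvalue (Matrix.toLinAlgEquiv' (A.map Complex.ofReal)) z :=
    Module.End.hasEigenvalue_iff_mem_spectrum.mpr hz'
  obtain ⟨v, hv⟩ := hev.exists_hasEigenvector
  have hvne : v ≠ 0 := hv.2
  have hveq : (A.map Complex.ofReal).mulVec v = z • v := by
    have h := hv.apply_eq_smul
    rwa [Matrix.toLinAlgEquiv'_apply] at h
  set w : n → ℝ := fun i => ‖v i‖ with hwdef
  have hw0 : ∀ i, 0 ≤ w i := fun i => norm_nonneg _
  have hwne : w ≠ 0 := by
    intro h
    exact hvne (funext fun i => norm_eq_zero.mp (congrFun h i))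
  have hineq1 : ∀ i, ‖z‖ * w i ≤ A.mulVec w i := fun i => by
    have h1 : ‖z‖ * w i = ‖(A.map Complex.ofReal).mulVec v i‖ := by
      rw [hveq]; simp [hwdef, map_mul]
    rw [h1]
    exact rpf_abs_mulVec A hA v i
  have hle_s : ‖z‖ ≤ s := rpf_sub_eig_le A hA s r hr heig hw0 hwne hineq1
  rcases lt_or_eq_of_le hle_s with h | habs'
  · exact h
  · -- |z| = s : derive z = s, a contradiction
    exfalso
    -- Step A : A w = s w
    have hAw : A.mulVec w = s • w := by
      by_contra hne2
      set u := A.mulVec w - s • w with hudef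
      have hu0 : ∀ i, 0 ≤ u i := fun i => by
        have := hineq1 i
        rw [habs'] at this
        simp only [hudef, Pi.sub_apply, Pi.smul_apply, smul_eq_mul, sub_nonneg]
        exact this
      have hune : u ≠ 0 := fun h => hne2 (sub_eq_zero.mp h)
      set w' := (A ^ k).mulVec w with hw'def
      have hw'pos : ∀ i, 0 < w' i := rpf_mulVec_pos _ hk hw0 hwne
      have hw'ne : w' ≠ 0 := fun h => (hw'pos (Classical.arbitrary n)).ne' (congrFun h _)
      have hAku : ∀ i, 0 < (A ^ k).mulVec u i := rpf_mulVec_pos _ hk hu0 hune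
      obtain ⟨i1, _, hi1⟩ := Finset.exists_min_image Finset.univ
        (fun i => (A ^ k).mulVec u i / w' i) Finset.univ_nonempty
      set ε := (A ^ k).mulVec u i1 / w' i1 with hε
      have hεpos : 0 < ε := div_pos (hAku i1) (hw'pos i1)
      have hAw_eq : A.mulVec w = s • w + u := by rw [hudef]; abel
      have hmain : ∀ i, (s + ε) * w' i ≤ A.mulVec w' i := fun i => by
        have h1 : ε * w' i ≤ (A ^ k).mulVec u i := by
          have h2 : ε ≤ (A ^ k).mulVec u i / w' i := hi1 i (Finset.mem_univ i)
          calc ε * w' i ≤ ((A ^ k).mulVec u i / w' i) * w' i :=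
                mul_le_mul_of_nonneg_right h2 (hw'pos i).le
            _ = (A ^ k).mulVec u i := div_mul_cancel₀ _ (hw'pos i).ne'
        have h2 : A.mulVec w' = s • w' + (A ^ k).mulVec u := by
          calc A.mulVec w' = (A * A ^ k).mulVec w := by rw [hw'def, Matrix.mulVec_mulVec]
            _ = (A ^ k * A).mulVec w := by rw [← pow_succ', pow_succ]
            _ = (A ^ k).mulVec (A.mulVec w) := (Matrix.mulVec_mulVec _ _ _).symm
            _ = (A ^ k).mulVec (s • w + u) := by rw [hAw_eq]
            _ = s • w' + (A ^ k).mulVec u := by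
                rw [Matrix.mulVec_add, Matrix.mulVec_smul, hw'def]
        rw [h2]
        simp only [Pi.add_apply, Pi.smul_apply, smul_eq_mul]
        nlinarith [h1]
      have hcontra : s + ε ≤ s :=
        rpf_sub_eig_le A hA s r hr heig (fun i => (hw'pos i).le) hw'ne hmain
      linarith
    -- Step B : w is strictly positive
    have hwpos : ∀ i, 0 < w i := fun i => by
      have h1 := rpf_mulVec_pos (A ^ k) hk hw0 hwne i
      rw [rpf_pow_eig A s w hAw k] at h1
      have hsk : 0 < s ^ k := pow_pos hs k
      rw [Pi.smul_apply, smul_eq_mul] at h1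
      nlinarith [h1, hsk, hw0 i]
    -- Step C : alignment
    have hmap : (A.map Complex.ofReal) ^ k = (A ^ k).map Complex.ofReal := by
      have h := map_pow (Complex.ofRealHom.mapMatrix : Matrix n n ℝ →+* Matrix n n ℂ) A k
      simp only [RingHom.mapMatrix_apply] at h
      exact h.symm
    have hpowv : ((A ^ k).map Complex.ofReal).mulVec v = z ^ k • v := by
      rw [← hmap]
      exact rpf_pow_eig (A.map Complex.ofReal) z v hveq k
    have hApow : ∀ i j, 0 < (A ^ k) i j := hk
    set i := Classical.arbitrary n with hi
    set a : n → ℂ := fun j => (((A ^ k) i j : ℝ) : ℂ) * v j with hadef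
    have hsum_a : ∑ j, a j = z ^ k * v i := by
      have h := congrFun hpowv i
      simpa [Matrix.mulVec, dotProduct, Matrix.map_apply, Pi.smul_apply,
        smul_eq_mul, hadef] using h
    have habs_a : ∀ j, ‖a j‖ = (A ^ k) i j * w j := fun j => by
      rw [hadef]
      simp only []
      rw [norm_mul, Complex.norm_real, Real.norm_eq_abs, _root_.abs_of_nonneg (hApow i j).le]
    have hT_abs : ‖∑ j, a j‖ = s ^ k * w i := by
      rw [hsum_a, norm_mul, norm_pow, habs']
    have habs_sum : ‖∑ j, a j‖ = ∑ j, ‖a j‖ := by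
      rw [hT_abs]
      have hR : ∑ j, ‖a j‖ = (A ^ k).mulVec w i := by
        simp only [Matrix.mulVec, dotProduct]
        exact Finset.sum_congr rfl fun j _ => habs_a j
      rw [hR, rpf_pow_eig A s w hAw k, Pi.smul_apply, smul_eq_mul]
    -- from alignment : v j * |T| = w j * T
    set T := ∑ j, a j with hTdef
    have hTabs_pos : 0 < ‖T‖ := by rw [hT_abs]; exact mul_pos (pow_pos hs k) (hwpos i)
    have halignv : ∀ j, v j * ((‖T‖ : ℝ) : ℂ) = ((w j : ℝ) : ℂ) * T := fun j => by
      have h := rpf_align a habs_sum j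
      rw [habs_a j] at h
      have hc : (((A ^ k) i j : ℝ) : ℂ) ≠ 0 := by
        simpa using (hApow i j).ne'
      apply mul_left_cancel₀ hc
      calc (((A ^ k) i j : ℝ) : ℂ) * (v j * ((‖T‖ : ℝ) : ℂ))
          = a j * ((‖T‖ : ℝ) : ℂ) := by rw [hadef]; ring
        _ = (((A ^ k) i j * w j : ℝ) : ℂ) * T := by rw [← h]
        _ = (((A ^ k) i j : ℝ) : ℂ) * (((w j : ℝ) : ℂ) * T) := by push_cast; ring
    -- conclude z = s
    have hTne : T ≠ 0 := fun h => by simp [h] at hTabs_pos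
    obtain ⟨i2, hi2⟩ : ∃ i2, 0 < w i2 := ⟨Classical.arbitrary n, hwpos _⟩
    have heigrow : z * v i2 = ∑ j, (((A i2 j : ℝ)) : ℂ) * v j := by
      have h := congrFun hveq i2
      simp only [Matrix.mulVec, dotProduct, Matrix.map_apply, Pi.smul_apply,
        smul_eq_mul] at h
      exact h.symm
    have hfinal : z * (((w i2 : ℝ) : ℂ) * T) = s * (((w i2 : ℝ) : ℂ) * T) := by
      calc z * (((w i2 : ℝ) : ℂ) * T) = z * (v i2 * ((‖T‖ : ℝ) : ℂ)) := by
            rw [halignv i2]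
        _ = (z * v i2) * ((‖T‖ : ℝ) : ℂ) := by ring
        _ = (∑ j, (((A i2 j : ℝ)) : ℂ) * v j) * ((‖T‖ : ℝ) : ℂ) := by rw [heigrow]
        _ = ∑ j, (((A i2 j : ℝ)) : ℂ) * (v j * ((‖T‖ : ℝ) : ℂ)) := by
            rw [Finset.sum_mul]; exact Finset.sum_congr rfl fun j _ => by ring
        _ = ∑ j, (((A i2 j : ℝ)) : ℂ) * (((w j : ℝ) : ℂ) * T) := by
            exact Finset.sum_congr rfl fun j _ => by rw [halignv j]
        _ = (((A.mulVec w i2 : ℝ)) : ℂ) * T := by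
            simp only [Matrix.mulVec, dotProduct]
            push_cast
            rw [Finset.sum_mul]
            exact Finset.sum_congr rfl fun j _ => by ring
        _ = (((s * w i2 : ℝ)) : ℂ) * T := by rw [hAw]; norm_num
        _ = s * (((w i2 : ℝ) : ℂ) * T) := by push_cast; ring
    have hwi2ne : ((w i2 : ℝ) : ℂ) * T ≠ 0 :=
      mul_ne_zero (by simpa using hi2.ne') hTne
    exact hzne (mul_right_cancel₀ hwi2ne hfinal)
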